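/- Let G be an Abelian group of cardinality γ > ℵ₀, let F_γ be the free group of rank γ, and let κ be a cardinal such that either ℵ₀ < κ < γ, or κ = γ and γ is singular. Then G and F_γ are not κ-asymorphic. -/

import Mathlib

open Cardinal Pointwise

universe u

/-- A bijection `f : G ≃ H` between groups is a `κ`-asymorphism if for all
`X ∈ [G]^{<κ}` and `Y ∈ [H]^{<κ}` there are `X' ∈ [G]^{<κ}`, `Y' ∈ [H]^{<κ}` with
`f(X x) ⊆ Y' ⬝ f x` for all `x ∈ G` and `f⁻¹(Y y) ⊆ X' ⬝ f⁻¹ y` for all `y ∈ H`. -/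
def IsAsymorphism {G H : Type u} [Group G] [Group H] (κ : Cardinal.{u})
    (f : G ≃ H) : Prop :=
  ∀ X : Set G, ∀ Y : Set H, #X < κ → #Y < κ →
    ∃ X' : Set G, ∃ Y' : Set H, #X' < κ ∧ #Y' < κ ∧
      (∀ x : G, ⇑f '' (X * {x}) ⊆ Y' * {f x}) ∧
      (∀ y : H, ⇑f.symm '' (Y * {y}) ⊆ X' * {f.symm y})

namespace NotAsymAux

variable {ι : Type u} [DecidableEq ι]

open FreeGroup

/-- The subgroup of the free group consisting of words all of whose letters
lie in `J`. -/
def suppSubgroup (J : Set ι) : Subgroup (FreeGroup ι) where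
  carrier := {w | ∀ p ∈ w.toWord, p.1 ∈ J}
  one_mem' := by
    intro p hp
    rw [FreeGroup.toWord_one] at hp
    exact absurd hp List.not_mem_nil
  mul_mem' := by
    intro a b ha hb p hp
    have hsub := (FreeGroup.toWord_mul_sublist a b).subset hp
    rcases List.mem_append.mp hsub with h | h
    · exact ha p h
    · exact hb p h
  inv_mem' := by
    intro a ha p hp
    rw [FreeGroup.toWord_inv, FreeGroup.invRev, List.mem_reverse, List.mem_map] at hp
    obtain ⟨q, hq, rfl⟩ := hp
    exact ha q hq

lemma mem_suppSubgroup_iff {J : Set ι} {w : FreeGroup ι} :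
    w ∈ suppSubgroup J ↔ ∀ p ∈ w.toWord, p.1 ∈ J := Iff.rfl

lemma suppSubgroup_mono {J J' : Set ι} (h : J ⊆ J') :
    suppSubgroup J ≤ suppSubgroup J' := fun w hw p hp => h (hw p hp)

lemma of_mem_suppSubgroup {J : Set ι} {j : ι} (hj : j ∈ J) :
    FreeGroup.of j ∈ suppSubgroup J := by
  intro p hp
  rw [FreeGroup.toWord_of] at hp
  rcases List.mem_singleton.mp hp with rfl
  exact hj

lemma reduce_append_single {t : ι} (b : Bool) :
    ∀ (L : List (ι × Bool)), (∀ p ∈ L, p.1 ≠ t) →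
      FreeGroup.reduce (L ++ [(t, b)]) = FreeGroup.reduce L ++ [(t, b)]
  | [], _ => rfl
  | x :: L, h => by
    have hL : ∀ p ∈ L, p.1 ≠ t := fun p hp => h p (List.mem_cons_of_mem _ hp)
    have hx : x.1 ≠ t := h x List.mem_cons_self
    have ih := reduce_append_single b L hL
    rw [List.cons_append, FreeGroup.reduce.cons, FreeGroup.reduce.cons, ih]
    cases hred : FreeGroup.reduce L with
    | nil =>
      simp only [List.nil_append, List.singleton_append]
      rw [if_neg (by rintro ⟨h1, -⟩; exact hx h1)]
    | cons y ys =>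
      simp only [List.cons_append]
      by_cases hc : x.1 = y.1 ∧ x.2 = !y.2
      · rw [if_pos hc, if_pos hc]
      · rw [if_neg hc, if_neg hc]
        rfl

lemma conj_fresh_notMem {J : Set ι} {t : ι} (ht : t ∉ J) {w : FreeGroup ι}
    (hw : w ∈ suppSubgroup J) (hw1 : w ≠ 1) :
    FreeGroup.of t * w * (FreeGroup.of t)⁻¹ ∉ suppSubgroup J := by
  intro hmem
  have hnt : ∀ p ∈ w.toWord, p.1 ≠ t := fun p hp hpt => ht (hpt ▸ hw p hp)
  have h1 : FreeGroup.of t * w * (FreeGroup.of t)⁻¹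
      = FreeGroup.mk ((t, true) :: (w.toWord ++ [(t, false)])) := by
    have hof : (FreeGroup.of t : FreeGroup ι) = FreeGroup.mk [(t, true)] := rfl
    have hofinv : (FreeGroup.of t : FreeGroup ι)⁻¹ = FreeGroup.mk [(t, false)] := by
      rw [hof, FreeGroup.inv_mk]
      rfl
    have hww : w = FreeGroup.mk w.toWord := (FreeGroup.mk_toWord).symm
    rw [hofinv, hof]
    conv_lhs => rw [hww]
    rw [FreeGroup.mul_mk, FreeGroup.mul_mk]
    simp
  have h2 : (FreeGroup.of t * w * (FreeGroup.of t)⁻¹).toWord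
      = (t, true) :: (w.toWord ++ [(t, false)]) := by
    rw [h1, FreeGroup.toWord_mk, FreeGroup.reduce.cons,
      reduce_append_single false w.toWord hnt, FreeGroup.reduce_toWord]
    cases hW : w.toWord with
    | nil => exact absurd (FreeGroup.toWord_eq_nil_iff.mp hW) hw1
    | cons y ys =>
      have hy : y.1 ≠ t := hnt y (by rw [hW]; exact List.mem_cons_self)
      have hcond : ¬((t, true).1 = y.1 ∧ (t, true).2 = !y.2) := by
        rintro ⟨h1', -⟩
        exact hy h1'.symm
      simp only [List.cons_append]
      rw [if_neg hcond]
  have := hmem (t, true) (by rw [h2]; exact List.mem_cons_self)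
  exact ht this

end NotAsymAux

/-- Let `G` be an Abelian group of cardinality `γ > ℵ₀` and let `F_γ` be the free group
of rank `γ`. If either `ℵ₀ < κ < γ`, or `κ = γ` and `γ` is singular, then `G` and `F_γ`
are not `κ`-asymorphic. -/
theorem not_asymorphic_abelian_free (γ κ : Cardinal.{u}) (hγ : ℵ₀ < γ)
    (hκ : (ℵ₀ < κ ∧ κ < γ) ∨ (κ = γ ∧ γ.ord.cof < γ))
    (G : Type u) [CommGroup G] (hG : #G = γ)
    (ι : Type u) (hι : #ι = γ) :
    ¬ ∃ f : G ≃ FreeGroup ι, IsAsymorphism κ f := by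
  classical
  rintro ⟨f, hf⟩
  have hκ0 : ℵ₀ < κ := by
    rcases hκ with ⟨h, -⟩ | ⟨h, -⟩
    · exact h
    · rw [h]; exact hγ
  have hκγ : κ ≤ γ := by
    rcases hκ with ⟨-, h⟩ | ⟨h, -⟩
    · exact h.le
    · rw [h]
  -- displacement sets
  set D' : FreeGroup ι → Set G :=
    fun b => Set.range fun y : FreeGroup ι => f.symm (b * y) * (f.symm y)⁻¹ with hD'def
  set D : G → Set (FreeGroup ι) :=
    fun a => Set.range fun x : G => f (a * x) * (f x)⁻¹ with hDdef
  -- smallness of backward displacement sets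
  have hD'small : ∀ Y : Set (FreeGroup ι), #Y < κ → #(⋃ b ∈ Y, D' b) < κ := by
    intro Y hY
    obtain ⟨X', Y', hX', hY', -, hsymm⟩ :=
      hf ∅ Y (by rw [Cardinal.mk_emptyCollection]; exact aleph0_pos.trans hκ0) hY
    refine lt_of_le_of_lt (Cardinal.mk_le_mk_of_subset ?_) hX'
    rintro g hg
    simp only [Set.mem_iUnion] at hg
    obtain ⟨b, hb, y, rfl⟩ := hg
    have hmem : f.symm (b * y) ∈ X' * {f.symm y} :=
      hsymm y ⟨b * y, Set.mul_mem_mul hb rfl, rfl⟩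
    obtain ⟨x', hx', z, hz, hxz⟩ := hmem
    rcases hz with rfl
    have : x' = f.symm (b * y) * (f.symm y)⁻¹ := by
      rw [← hxz]
      group
    show f.symm (b * y) * (f.symm y)⁻¹ ∈ X'
    rw [← this]
    exact hx'
  -- smallness of forward displacement sets
  have hDsmall : ∀ X : Set G, #X < κ → #(⋃ a ∈ X, D a) < κ := by
    intro X hX
    obtain ⟨X', Y', hX', hY', hfwd, -⟩ :=
      hf X ∅ hX (by rw [Cardinal.mk_emptyCollection]; exact aleph0_pos.trans hκ0)
    refine lt_of_le_of_lt (Cardinal.mk_le_mk_of_subset ?_) hY'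
    rintro g hg
    simp only [Set.mem_iUnion] at hg
    obtain ⟨a, ha, x, rfl⟩ := hg
    have hmem : f (a * x) ∈ Y' * {f x} :=
      hfwd x ⟨a * x, Set.mul_mem_mul ha rfl, rfl⟩
    obtain ⟨y', hy', z, hz, hyz⟩ := hmem
    rcases hz with rfl
    have : y' = f (a * x) * (f x)⁻¹ := by
      rw [← hyz]
      group
    show f (a * x) * (f x)⁻¹ ∈ Y'
    rw [← this]
    exact hy'
  have hD'b : ∀ b : FreeGroup ι, #(D' b) < κ := by
    intro b
    have h1 : #({b} : Set (FreeGroup ι)) < κ := by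
      rw [Cardinal.mk_singleton]
      exact one_lt_aleph0.trans hκ0
    have h2 := hD'small {b} h1
    simpa using h2
  have hDa : ∀ a : G, #(D a) < κ := by
    intro a
    have h1 : #({a} : Set G) < κ := by
      rw [Cardinal.mk_singleton]
      exact one_lt_aleph0.trans hκ0
    have h2 := hDsmall {a} h1
    simpa using h2
  -- γ-version of smallness
  have hD'γ : ∀ Y : Set (FreeGroup ι), #Y < γ → #(⋃ b ∈ Y, D' b) < γ := by
    intro Y hY
    rcases lt_or_ge #Y κ with h | h
    · exact (hD'small Y h).trans_le hκγ
    · have h1 : #(⋃ b ∈ Y, D' b) ≤ #Y * ⨆ b : Y, #(D' (b : FreeGroup ι)) :=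
        Cardinal.mk_biUnion_le D' Y
      have h2 : (⨆ b : Y, #(D' (b : FreeGroup ι))) ≤ κ :=
        ciSup_le' fun b => (hD'b b).le
      have h3 : #Y * (⨆ b : Y, #(D' (b : FreeGroup ι))) ≤ #Y * κ :=
        mul_le_mul_right h2 _
      have h4 : #Y * κ ≤ max (max #Y κ) ℵ₀ := Cardinal.mul_le_max _ _
      have h5 : max (max #Y κ) ℵ₀ = #Y := by
        rw [max_eq_left h, max_eq_left (hκ0.le.trans h)]
      exact lt_of_le_of_lt ((h1.trans h3).trans (h4.trans_eq h5)) hY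
  have hDγ : ∀ X : Set G, #X < γ → #(⋃ a ∈ X, D a) < γ := by
    intro X hX
    rcases lt_or_ge #X κ with h | h
    · exact (hDsmall X h).trans_le hκγ
    · have h1 : #(⋃ a ∈ X, D a) ≤ #X * ⨆ a : X, #(D (a : G)) :=
        Cardinal.mk_biUnion_le D X
      have h2 : (⨆ a : X, #(D (a : G))) ≤ κ :=
        ciSup_le' fun a => (hDa a).le
      have h3 : #X * (⨆ a : X, #(D (a : G))) ≤ #X * κ :=
        mul_le_mul_right h2 _
      have h4 : #X * κ ≤ max (max #X κ) ℵ₀ := Cardinal.mul_le_max _ _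
      have h5 : max (max #X κ) ℵ₀ = #X := by
        rw [max_eq_left h, max_eq_left (hκ0.le.trans h)]
      exact lt_of_le_of_lt ((h1.trans h3).trans (h4.trans_eq h5)) hX
  -- KEY construction
  have key : ∀ lam : Cardinal.{u}, ℵ₀ ≤ lam → lam < γ →
      ∃ t : ι, lam ≤ #(D' (FreeGroup.of t)) := by
    intro lam hlaminf hlam
    obtain ⟨J₀, hJ₀⟩ : ∃ J₀ : Set ι, #J₀ = lam :=
      Cardinal.le_mk_iff_exists_set.mp (by rw [hι]; exact hlam.le)
    set L₀ : Subgroup (FreeGroup ι) := NotAsymAux.suppSubgroup J₀ with hL₀def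
    -- upper bound for #L₀
    have hL₀le : #(L₀ : Set (FreeGroup ι)) ≤ lam := by
      have hinj1 : Function.Injective
          (fun w : (L₀ : Set (FreeGroup ι)) =>
            (w : FreeGroup ι).toWord.pmap
              (fun (p : ι × Bool) (hp : p.1 ∈ J₀) => ((⟨p.1, hp⟩ : J₀), p.2))
              w.2) := by
        intro w w' hww
        have hrec : ∀ (v : (L₀ : Set (FreeGroup ι))),
            ((v : FreeGroup ι).toWord.pmap
              (fun (p : ι × Bool) (hp : p.1 ∈ J₀) => ((⟨p.1, hp⟩ : J₀), p.2))
              v.2).map (fun r : J₀ × Bool => ((r.1 : ι), r.2))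
            = (v : FreeGroup ι).toWord := by
          intro v
          exact (List.map_pmap ..).trans (by simp; exact (List.pmap_eq_map _).trans (List.map_id' _))
        have : (w : FreeGroup ι).toWord = (w' : FreeGroup ι).toWord := by
          rw [← hrec w, ← hrec w']
          exact congrArg _ hww
        exact Subtype.ext (FreeGroup.toWord_injective this)
      have h1 : #(L₀ : Set (FreeGroup ι)) ≤ #(List (J₀ × Bool)) :=
        Cardinal.mk_le_of_injective hinj1
      have h2 : #(List (J₀ × Bool)) ≤ max ℵ₀ #(J₀ × Bool) := Cardinal.mk_list_le_max _
      have h3 : #(J₀ × Bool) ≤ lam := by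
        have : #(J₀ × Bool) = #J₀ * 2 := by
          simp [Cardinal.mk_prod]
        rw [this, hJ₀]
        exact Cardinal.mul_le_max_of_aleph0_le_left hlaminf |>.trans
          (max_le le_rfl ((Cardinal.nat_lt_aleph0 2).le.trans hlaminf))
      calc #(L₀ : Set (FreeGroup ι)) ≤ max ℵ₀ #(J₀ × Bool) := h1.trans h2
        _ ≤ max ℵ₀ lam := max_le_max le_rfl h3
        _ = lam := max_eq_right hlaminf
    have hL₀γ : #(L₀ : Set (FreeGroup ι)) < γ := hL₀le.trans_lt hlam
    -- lower bound for #L₀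
    have hL₀ge : lam ≤ #(L₀ : Set (FreeGroup ι)) := by
      rw [← hJ₀]
      refine Cardinal.mk_le_of_injective
        (f := fun j : J₀ => (⟨FreeGroup.of (j : ι),
          NotAsymAux.of_mem_suppSubgroup j.2⟩ : (L₀ : Set (FreeGroup ι)))) ?_
      intro j j' hjj
      have : FreeGroup.of (j : ι) = FreeGroup.of (j' : ι) := congrArg Subtype.val hjj
      exact Subtype.ext (FreeGroup.of_injective this)
    -- the abelian-side set and its forward displacement
    set A1 : Set G := ⋃ b ∈ (L₀ : Set (FreeGroup ι)), D' b with hA1def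
    have hA1 : #A1 < γ := hD'γ _ hL₀γ
    set DA : Set (FreeGroup ι) := ⋃ a ∈ A1, D a with hDAdef
    have hDA : #DA < γ := hDγ _ hA1
    -- letters of elements of DA
    set J₂ : Set ι := J₀ ∪ ⋃ w ∈ DA, {i : ι | ∃ c : Bool, (i, c) ∈ (w : FreeGroup ι).toWord}
      with hJ₂def
    have hJ₂ : #J₂ < γ := by
      have hletters : ∀ w : FreeGroup ι,
          #{i : ι | ∃ c : Bool, (i, c) ∈ w.toWord} ≤ ℵ₀ := by
        intro w
        have hfin : {i : ι | ∃ c : Bool, (i, c) ∈ w.toWord}.Finite := by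
          have : {i : ι | ∃ c : Bool, (i, c) ∈ w.toWord}
              ⊆ Prod.fst '' {p : ι × Bool | p ∈ w.toWord} := by
            rintro i ⟨c, hc⟩
            exact ⟨(i, c), hc, rfl⟩
          exact (w.toWord.finite_toSet.image Prod.fst).subset this
        exact hfin.lt_aleph0.le
      have h1 : #(⋃ w ∈ DA, {i : ι | ∃ c : Bool, (i, c) ∈ (w : FreeGroup ι).toWord}) ≤
          #DA * ⨆ w : DA, #{i : ι | ∃ c : Bool, (i, c) ∈ (w : FreeGroup ι).toWord} :=
        Cardinal.mk_biUnion_le _ _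
      have h2 : (⨆ w : DA, #{i : ι | ∃ c : Bool, (i, c) ∈ (w : FreeGroup ι).toWord}) ≤ ℵ₀ :=
        ciSup_le' fun w => hletters w
      have h3 : #DA * ℵ₀ ≤ max (max #DA ℵ₀) ℵ₀ := Cardinal.mul_le_max _ _
      have h4 : max (max #DA ℵ₀) ℵ₀ < γ := by
        simp only [max_lt_iff]
        exact ⟨⟨hDA, hγ⟩, hγ⟩
      have h5 : #(⋃ w ∈ DA, {i : ι | ∃ c : Bool, (i, c) ∈ (w : FreeGroup ι).toWord}) < γ :=
        lt_of_le_of_lt (h1.trans ((mul_le_mul_right h2 _).trans h3)) h4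
      refine lt_of_le_of_lt (Cardinal.mk_union_le _ _) ?_
      exact Cardinal.add_lt_of_lt hγ.le (hJ₀ ▸ hlam) h5
    -- a fresh generator
    obtain ⟨t, ht⟩ : ∃ t : ι, t ∉ J₂ := by
      by_contra hno
      push_neg at hno
      have : J₂ = Set.univ := Set.eq_univ_iff_forall.mpr hno
      rw [this, Cardinal.mk_univ, hι] at hJ₂
      exact lt_irrefl _ hJ₂
    refine ⟨t, ?_⟩
    -- the injection from L₀ into D' (of t)
    set Ft : FreeGroup ι := FreeGroup.of t with hFtdef
    set dd : FreeGroup ι → G := fun l => f.symm (Ft * l) * (f.symm l)⁻¹ with hdddef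
    set aa : FreeGroup ι → G := fun l => f.symm l * (f.symm 1)⁻¹ with haadef
    set uu : FreeGroup ι → G := fun l => dd l * f.symm 1 with huudef
    set ww : FreeGroup ι → FreeGroup ι := fun l => f (aa l * uu l) * (f (uu l))⁻¹ with hwwdef
    have hmain : ∀ l : FreeGroup ι, ww l * f (uu l) = Ft * l := by
      intro l
      have h1 : aa l * uu l = dd l * f.symm l := by
        show f.symm l * (f.symm 1)⁻¹ * (dd l * f.symm 1) = dd l * f.symm l
        rw [mul_mul_mul_comm, inv_mul_cancel, mul_one, mul_comm]
      have h2 : dd l * f.symm l = f.symm (Ft * l) := by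
        show f.symm (Ft * l) * (f.symm l)⁻¹ * f.symm l = f.symm (Ft * l)
        rw [inv_mul_cancel_right]
      show f (aa l * uu l) * (f (uu l))⁻¹ * f (uu l) = Ft * l
      rw [inv_mul_cancel_right, h1, h2, Equiv.apply_symm_apply]
    have hddmem : ∀ l : FreeGroup ι, dd l ∈ D' Ft := fun l => ⟨l, rfl⟩
    have haamem : ∀ l : FreeGroup ι, l ∈ L₀ → aa l ∈ A1 := by
      intro l hl
      rw [hA1def]
      refine Set.mem_biUnion hl ?_
      exact ⟨1, by simp [haadef]⟩
    have hwwmem : ∀ l : FreeGroup ι, l ∈ L₀ → ww l ∈ DA := by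
      intro l hl
      rw [hDAdef]
      exact Set.mem_biUnion (haamem l hl) ⟨uu l, by simp [hwwdef]⟩
    have hDAsupp : ∀ w : FreeGroup ι, w ∈ DA → w ∈ NotAsymAux.suppSubgroup J₂ := by
      intro w hwDA p hp
      rw [hJ₂def]
      right
      refine Set.mem_biUnion hwDA ?_
      exact ⟨p.2, by simpa using hp⟩
    have hinj : Function.Injective
        (fun l : (L₀ : Set (FreeGroup ι)) => (⟨dd l, hddmem l⟩ : (D' Ft : Set G))) := by
      rintro ⟨l, hl⟩ ⟨l', hl'⟩ heq
      simp only [Subtype.mk.injEq] at heq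
      refine Subtype.ext ?_
      by_contra hne
      have hv1 : l * l'⁻¹ ≠ 1 := by
        intro hv
        exact hne (mul_inv_eq_one.mp hv)
      have huu' : uu l = uu l' := by
        rw [huudef]
        simp only
        rw [heq]
      have e3 : Ft * (l * l'⁻¹) * Ft⁻¹ = (Ft * l) * (Ft * l')⁻¹ := by group
      rw [← hmain l, ← hmain l', huu'] at e3
      have e4 : Ft * (l * l'⁻¹) * Ft⁻¹ = ww l * (ww l')⁻¹ := by
        rw [e3]
        group
      have hmemw : ww l * (ww l')⁻¹ ∈ NotAsymAux.suppSubgroup J₂ :=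
        Subgroup.mul_mem _ (hDAsupp _ (hwwmem l hl)) (Subgroup.inv_mem _ (hDAsupp _ (hwwmem l' hl')))
      have hvmem : l * l'⁻¹ ∈ NotAsymAux.suppSubgroup J₂ := by
        have : l * l'⁻¹ ∈ L₀ := Subgroup.mul_mem _ hl (Subgroup.inv_mem _ hl')
        exact NotAsymAux.suppSubgroup_mono (by rw [hJ₂def]; exact Set.subset_union_left) this
      exact NotAsymAux.conj_fresh_notMem ht hvmem hv1 (e4 ▸ hmemw)
    calc lam ≤ #(L₀ : Set (FreeGroup ι)) := hL₀ge
      _ ≤ #(D' Ft : Set G) := Cardinal.mk_le_of_injective hinj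
  -- Now derive the contradiction in the two cases
  rcases hκ with ⟨hκinf, hκlt⟩ | ⟨hκeq, hcof⟩
  · obtain ⟨t, ht⟩ := key κ hκinf.le hκlt
    exact absurd (ht.trans_lt (hD'b (FreeGroup.of t))) (lt_irrefl κ)
  · subst hκeq
    have hsucc : ∀ μ : Cardinal.{u}, μ < κ → Order.succ (max μ ℵ₀) < κ := by
      intro μ hμ
      have h1 : max μ ℵ₀ < κ := max_lt hμ hκ0
      rcases lt_or_eq_of_le (Order.succ_le_of_lt h1) with h | h
      · exact h
      · exfalso
        have hreg := Cardinal.isRegular_succ (le_max_right μ ℵ₀)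
        rw [h] at hreg
        exact absurd hreg.cof_eq hcof.ne
    -- a uniform bound on the sizes of single displacement sets
    have hbdd : ∃ c : Cardinal.{u}, c < κ ∧ ∀ b : FreeGroup ι, #(D' b) ≤ c := by
      by_contra hno
      push_neg at hno
      obtain ⟨ι₀, g, hlsub, hcard⟩ := Ordinal.exists_lsub_cof κ.ord
      have hgi : ∀ i : ι₀, (g i).card < κ := by
        intro i
        rw [← Cardinal.lt_ord, ← hlsub]
        exact Ordinal.lt_lsub g i
      choose b hb using fun i => hno _ (hgi i)
      set T : Set (FreeGroup ι) := Set.range b with hTdef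
      have hT : #T < κ := by
        refine lt_of_le_of_lt (Cardinal.mk_range_le) ?_
        rw [hcard]
        exact hcof
      have hU := hD'small T hT
      set U : Set G := ⋃ b' ∈ T, D' b' with hUdef
      have hbig : ∀ lam' : Cardinal.{u}, lam' < κ → lam' ≤ #U := by
        intro lam' h'
        have h'' : lam'.ord < Ordinal.lsub g := by
          rw [hlsub]
          exact Cardinal.ord_lt_ord.mpr h'
        obtain ⟨i, hi⟩ := Ordinal.lt_lsub_iff.mp h''
        calc lam' = lam'.ord.card := (Cardinal.card_ord _).symm
          _ ≤ (g i).card := Ordinal.card_le_card hi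
          _ ≤ #(D' (b i)) := (hb i).le
          _ ≤ #U := Cardinal.mk_le_mk_of_subset
              (Set.subset_biUnion_of_mem (Set.mem_range_self i))
      have hbig2 := hbig (Order.succ (max #U ℵ₀)) (hsucc _ hU)
      have : #U < Order.succ (max #U ℵ₀) :=
        lt_of_le_of_lt (le_max_left _ _) (Order.lt_succ _)
      exact absurd hbig2 (not_le.mpr this)
    obtain ⟨c, hc, hcb⟩ := hbdd
    have hlamlt : Order.succ (max c ℵ₀) < κ := hsucc c hc
    obtain ⟨t, ht⟩ := key (Order.succ (max c ℵ₀))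
      ((le_max_right c ℵ₀).trans (Order.le_succ _)) hlamlt
    have : #(D' (FreeGroup.of t)) < Order.succ (max c ℵ₀) :=
      lt_of_le_of_lt ((hcb _).trans (le_max_left c ℵ₀)) (Order.lt_succ _)
    exact absurd ht (not_le.mpr this)
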